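/- For any vector x in GF(2)^n with r(x) runs, the number of vectors obtainable from x by a t-grain-error equals the sum over j from 0 to min(t, r(x)-1) of binomial(r(x)-1, j). -/

import Mathlib

/-- `e` is a `t`-grain-error for `x`: weight at most `t`, `e₁ = 0`, and an error at
position `i` (2 ≤ i ≤ n) requires `x_i ≠ x_{i-1}`. (0-indexed here.) -/
def grainError {n : ℕ} (t : ℕ) (x e : Fin n → ZMod 2) : Prop :=
  (Finset.univ.filter fun i => e i ≠ 0).card ≤ t ∧
  (∀ i : Fin n, (i : ℕ) = 0 → e i = 0) ∧
  (∀ i : Fin n, 0 < (i : ℕ) → e i ≠ 0 →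
    x i ≠ x ⟨(i : ℕ) - 1, lt_of_le_of_lt (Nat.sub_le _ _) i.isLt⟩)

/-- The grain error-ball `B_{t,G}(x)`. -/
def grainBall {n : ℕ} (t : ℕ) (x : Fin n → ZMod 2) : Set (Fin n → ZMod 2) :=
  {y | ∃ e, grainError t x e ∧ y = x + e}

/-- The number of runs of a binary vector. -/
def runs {n : ℕ} (x : Fin n → ZMod 2) : ℕ :=
  (if n = 0 then 0 else 1) +
  (Finset.univ.filter fun i : Fin n =>
    0 < (i : ℕ) ∧ x i ≠ x ⟨(i : ℕ) - 1, lt_of_le_of_lt (Nat.sub_le _ _) i.isLt⟩).card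

/-- The size of the grain error-ball equals `∑_{j=0}^{min(t, r(x)-1)} C(r(x)-1, j)`. -/
theorem stmt0 {n t : ℕ} (x : Fin n → ZMod 2) :
    Nat.card (grainBall t x) =
      ∑ j ∈ Finset.range (min t (runs x - 1) + 1), Nat.choose (runs x - 1) j := by
  classical
  set S : Finset (Fin n) := Finset.univ.filter fun i : Fin n =>
    0 < (i : ℕ) ∧ x i ≠ x ⟨(i : ℕ) - 1, lt_of_le_of_lt (Nat.sub_le _ _) i.isLt⟩ with hS
  have hrs : runs x - 1 = S.card := by
    unfold runs
    rw [← hS]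
    split_ifs with h
    · have : S.card = 0 := by
        subst h
        rw [hS]
        simp
      omega
    · omega
  set F : Finset (Fin n) → (Fin n → ZMod 2) :=
    fun T => x + fun i => if i ∈ T then 1 else 0 with hF
  have key : ∀ a : ZMod 2, a ≠ 0 → a = 1 := by decide
  set P : Finset (Finset (Fin n)) := S.powerset.filter fun T => T.card ≤ t with hP
  have hball : grainBall t x = ↑(P.image F) := by
    ext y
    simp only [grainBall, Set.mem_setOf_eq, Finset.coe_image, Set.mem_image,
      Finset.mem_coe, hP, Finset.mem_filter, Finset.mem_powerset]
    constructor
    · rintro ⟨e, ⟨hc, h0, h1⟩, rfl⟩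
      refine ⟨Finset.univ.filter fun i => e i ≠ 0, ⟨?_, hc⟩, ?_⟩
      · intro i hi
        simp only [Finset.mem_filter, Finset.mem_univ, true_and] at hi
        rw [hS]
        simp only [Finset.mem_filter, Finset.mem_univ, true_and]
        have hpos : 0 < (i : ℕ) := by
          rcases Nat.eq_zero_or_pos (i : ℕ) with h | h
          · exact absurd (h0 i h) hi
          · exact h
        exact ⟨hpos, h1 i hpos hi⟩
      · funext i
        simp only [hF, Pi.add_apply]
        congr 1
        by_cases he : e i = 0
        · simp [he]
        · simp [he, key _ he]
    · rintro ⟨T, ⟨hTS, hTc⟩, rfl⟩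
      refine ⟨fun i => if i ∈ T then 1 else 0, ⟨?_, ?_, ?_⟩, rfl⟩
      · refine le_trans (le_of_eq ?_) hTc
        congr 1
        ext i
        simp only [Finset.mem_filter, Finset.mem_univ, true_and]
        by_cases h : i ∈ T <;> simp [h]
      · intro i hi
        have hiT : i ∉ T := by
          intro hmem
          have := hTS hmem
          rw [hS] at this
          simp only [Finset.mem_filter, Finset.mem_univ, true_and] at this
          omega
        simp [hiT]
      · intro i hpos hne
        have hiT : i ∈ T := by
          by_contra h
          simp [h] at hne
        have := hTS hiT
        rw [hS] at this
        simp only [Finset.mem_filter, Finset.mem_univ, true_and] at this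
        exact this.2
  have hinj : Set.InjOn F ↑P := by
    intro T _ T' _ h
    ext i
    have h2 := congrFun h i
    simp only [hF, Pi.add_apply] at h2
    have h3 := add_left_cancel h2
    by_cases hi : i ∈ T <;> by_cases hi' : i ∈ T' <;> simp_all
  have hPcard : P.card = ∑ j ∈ Finset.range (t + 1), Nat.choose S.card j := by
    have hPeq : P = (Finset.range (t + 1)).biUnion fun j => Finset.powersetCard j S := by
      ext T
      simp only [hP, Finset.mem_filter, Finset.mem_powerset, Finset.mem_biUnion,
        Finset.mem_range, Finset.mem_powersetCard, Nat.lt_succ_iff]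
      constructor
      · rintro ⟨h1, h2⟩; exact ⟨T.card, h2, h1, rfl⟩
      · rintro ⟨j, hj, h1, rfl⟩; exact ⟨h1, hj⟩
    rw [hPeq, Finset.card_biUnion]
    · simp [Finset.card_powersetCard]
    · intro a _ b _ hab
      simp only [Finset.disjoint_left]
      intro T hT hT'
      rw [Finset.mem_powersetCard] at hT hT'
      exact hab (hT.2.symm.trans hT'.2)
  rw [hball, Nat.card_coe_set_eq, Set.ncard_coe_finset,
    Finset.card_image_of_injOn hinj, hPcard, hrs]
  symm
  apply Finset.sum_subset
  · intro j hj
    simp only [Finset.mem_range] at *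
    omega
  · intro j hj hj2
    simp only [Finset.mem_range] at hj hj2
    exact Nat.choose_eq_zero_of_lt (by omega)
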